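/- For every integer n ≥ 2 and every finite field F with q elements, any two connected components of the graph D(n,q) are isomorphic: for any two vertices u, v of D(n,q), the subgraphs induced on the connected component of u and on the connected component of v are isomorphic as graphs. -/

import Mathlib

/-- The `k`-th coordinate (0-based) of a vector in `F^n`, with junk value `0` out of range. -/
def coordOf {n : ℕ} {F : Type*} [Field F] (v : Fin n → F) (k : ℕ) : F :=
  if h : k < n then v ⟨k, h⟩ else 0

/-- Incidence between a point `p` and a line `l` in the graph `D(n,q)`:
for every 1-based index `m` with `2 ≤ m ≤ n`, the corresponding defining equation holds.
For `m ∈ {2,3,4}` these are `l₂ - p₂ = l₁p₁`, `l₃ - p₃ = l₂p₁`, `l₄ - p₄ = l₁p₂`, and for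
`m ≥ 5` the equation is determined by `m mod 4` following the four equations
`l_i - p_i = l₁ p_{i-2}`, `l_{i+1} - p_{i+1} = l_{i-1} p₁`, `l_{i+2} - p_{i+2} = l_i p₁`,
`l_{i+3} - p_{i+3} = l₁ p_{i+1}` for `i ≡ 1 (mod 4)`, `i ≥ 5`. -/
def DInc (n : ℕ) (F : Type*) [Field F] (p l : Fin n → F) : Prop :=
  ∀ m : ℕ, 2 ≤ m → m ≤ n →
    coordOf l (m - 1) - coordOf p (m - 1) =
      if m = 2 then coordOf l 0 * coordOf p 0
      else if m = 3 then coordOf l 1 * coordOf p 0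
      else if m = 4 then coordOf l 0 * coordOf p 1
      else if m % 4 = 1 ∨ m % 4 = 0 then coordOf l 0 * coordOf p (m - 3)
      else coordOf l (m - 3) * coordOf p 0

/-- The bipartite graph `D(n,q)`: vertices are a disjoint union of points (`Sum.inl`)
and lines (`Sum.inr`), both copies of `F^n`, adjacent iff incident. -/
def DGraph (n : ℕ) (F : Type*) [Field F] :
    SimpleGraph ((Fin n → F) ⊕ (Fin n → F)) where
  Adj x y :=
    match x, y with
    | Sum.inl p, Sum.inr l => DInc n F p l
    | Sum.inr l, Sum.inl p => DInc n F p l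
    | _, _ => False
  symm := by constructor; rintro (p | l) (p' | l') h <;> first | exact h | exact h.elim
  loopless := by constructor; rintro (p | l) h <;> exact h

namespace DCI

variable {F : Type*} [Field F]

def krhs (L P : ℕ → F) (k : ℕ) : F :=
  if k = 1 then L 0 * P 0
  else if k = 2 then L 1 * P 0
  else if k % 4 = 3 ∨ k % 4 = 0 then L 0 * P (k - 2)
  else L (k - 2) * P 0

lemma krhs_eval (L P : ℕ → F) (k : ℕ) (hk : 3 ≤ k) :
    krhs L P k = if k % 4 = 3 ∨ k % 4 = 0 then L 0 * P (k - 2) else L (k - 2) * P 0 := by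
  unfold krhs
  rw [if_neg (by omega), if_neg (by omega)]

lemma krhs_congr {L P L2 P2 : ℕ → F} {k : ℕ}
    (hL0 : L2 0 = L 0) (hL1 : L2 1 = L 1) (hLk : L2 (k - 2) = L (k - 2))
    (hP0 : P2 0 = P 0) (hPk : P2 (k - 2) = P (k - 2)) :
    krhs L2 P2 k = krhs L P k := by
  unfold krhs
  split_ifs <;> simp only [hL0, hL1, hLk, hP0, hPk]

/-- `Sat N L P` : the sequences satisfy all defining equations with index `< N`. -/
def Sat (N : ℕ) (L P : ℕ → F) : Prop :=
  ∀ k, 1 ≤ k → k < N → L k - P k = krhs L P k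

/-- Correction added to point coordinates by the automorphism `t_s(a)`. -/
def tA (s : ℕ) (a : F) (X : ℕ → F) (j : ℕ) : F :=
  if j = s then a
  else if j = s + 2 then (if s % 4 = 1 ∨ s % 4 = 2 then 0 else -(a * X 0))
  else if s + 4 ≤ j ∧ (j - s) % 2 = 0 then
    (if s % 4 = 1 ∨ s % 4 = 2 then a * X (j - s - 3)
     else if j = s + 4 then -(a * X 1)
     else -(a * X (j - s - 4)))
  else 0

/-- Correction added to line coordinates by the automorphism `t_s(a)`. -/
def tB (s : ℕ) (a : F) (X : ℕ → F) (j : ℕ) : F :=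
  if j = s then a
  else if j = s + 2 then (if s % 4 = 1 ∨ s % 4 = 2 then a * X 0 else 0)
  else tA s a X j

section tEval
variable (s : ℕ) (a : F) (X : ℕ → F)

lemma tA_out (j : ℕ) (h : ¬(s ≤ j ∧ (j - s) % 2 = 0)) : tA s a X j = 0 := by
  unfold tA
  rw [if_neg (by omega), if_neg (by omega), if_neg (by omega)]

lemma tB_out (j : ℕ) (h : ¬(s ≤ j ∧ (j - s) % 2 = 0)) : tB s a X j = 0 := by
  unfold tB
  rw [if_neg (by omega), if_neg (by omega)]
  exact tA_out s a X j h

lemma tA_self : tA s a X s = a := by unfold tA; rw [if_pos rfl]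

lemma tB_self : tB s a X s = a := by unfold tB; rw [if_pos rfl]

lemma tA_s2P (hsp : s % 4 = 1 ∨ s % 4 = 2) : tA s a X (s + 2) = 0 := by
  unfold tA; rw [if_neg (by omega), if_pos rfl, if_pos hsp]

lemma tA_s2L (hsp : ¬(s % 4 = 1 ∨ s % 4 = 2)) : tA s a X (s + 2) = -(a * X 0) := by
  unfold tA; rw [if_neg (by omega), if_pos rfl, if_neg hsp]

lemma tB_s2P (hsp : s % 4 = 1 ∨ s % 4 = 2) : tB s a X (s + 2) = a * X 0 := by
  unfold tB; rw [if_neg (by omega), if_pos rfl, if_pos hsp]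

lemma tB_s2L (hsp : ¬(s % 4 = 1 ∨ s % 4 = 2)) : tB s a X (s + 2) = 0 := by
  unfold tB; rw [if_neg (by omega), if_pos rfl, if_neg hsp]

lemma tB_eq_tA (j : ℕ) (h : s + 3 ≤ j) : tB s a X j = tA s a X j := by
  unfold tB
  rw [if_neg (by omega), if_neg (by omega)]

lemma tA_tailP (hsp : s % 4 = 1 ∨ s % 4 = 2) {j r : ℕ} (hj : j = s + 3 + r)
    (hr : r % 2 = 1) : tA s a X j = a * X r := by
  unfold tA
  rw [if_neg (by omega), if_neg (by omega), if_pos (by omega), if_pos hsp]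
  have e : j - s - 3 = r := by omega
  rw [e]

lemma tA_s4L (hsp : ¬(s % 4 = 1 ∨ s % 4 = 2)) : tA s a X (s + 4) = -(a * X 1) := by
  unfold tA
  rw [if_neg (by omega), if_neg (by omega), if_pos (by omega), if_neg hsp, if_pos rfl]

lemma tA_tailL (hsp : ¬(s % 4 = 1 ∨ s % 4 = 2)) {j r : ℕ} (hj : j = s + 4 + r)
    (hr : r % 2 = 0) (hr2 : 2 ≤ r) : tA s a X j = -(a * X r) := by
  unfold tA
  rw [if_neg (by omega), if_neg (by omega), if_pos (by omega), if_neg hsp, if_neg (by omega)]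
  have e : j - s - 4 = r := by omega
  rw [e]

end tEval

theorem sat_trans {N : ℕ} (s : ℕ) (hs : 2 ≤ s) (a : F) (L P L' P' : ℕ → F)
    (hL' : ∀ j, L' j = L j + tB s a L j) (hP' : ∀ j, P' j = P j + tA s a P j)
    (h : Sat N L P) : Sat N L' P' := by
  intro k hk1 hkN
  have hk := h k hk1 hkN
  rw [hL' k, hP' k]
  by_cases hA : k ≤ s ∨ (k - s) % 2 = 1
  · -- out of chain (or k = s): corrections cancel, rhs unchanged
    have hout : ∀ j : ℕ, j = 0 ∨ j = 1 ∨ j = k - 2 → ¬(s ≤ j ∧ (j - s) % 2 = 0) := by omega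
    have hcong : krhs L' P' k = krhs L P k :=
      krhs_congr
        (by rw [hL' 0, tB_out s a L 0 (hout 0 (by omega)), add_zero])
        (by rw [hL' 1, tB_out s a L 1 (hout 1 (by omega)), add_zero])
        (by rw [hL' (k-2), tB_out s a L (k-2) (hout (k-2) (by omega)), add_zero])
        (by rw [hP' 0, tA_out s a P 0 (hout 0 (by omega)), add_zero])
        (by rw [hP' (k-2), tA_out s a P (k-2) (hout (k-2) (by omega)), add_zero])
    rw [hcong]
    have heq : tB s a L k = tA s a P k := by
      rcases eq_or_ne k s with rfl | hne
      · rw [tA_self, tB_self]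
      · rw [tA_out s a P k (by omega), tB_out s a L k (by omega)]
    rw [heq]
    linear_combination hk
  · -- in-chain cases: s < k, k - s even
    by_cases hsp : s % 4 = 1 ∨ s % 4 = 2
    · -- P shape
      rcases (show k = s + 2 ∨ k = s + 4 ∨ (s + 6 ≤ k ∧ (k - s) % 4 = 2) ∨
          (s + 8 ≤ k ∧ (k - s) % 4 = 0) by omega) with rfl | rfl | ⟨h6, hm4⟩ | ⟨h8, hm4⟩
      · -- k = s + 2
        rw [krhs_eval L' P' (s+2) (by omega), if_pos (by omega)]
        rw [krhs_eval L P (s+2) (by omega), if_pos (by omega)] at hk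
        rw [show s + 2 - 2 = s by omega] at hk ⊢
        rw [hL' 0, tB_out s a L 0 (by omega), add_zero, hP' s, tA_self,
          tB_s2P s a L hsp, tA_s2P s a P hsp]
        linear_combination hk
      · -- k = s + 4
        rw [krhs_eval L' P' (s+4) (by omega), if_neg (by omega)]
        rw [krhs_eval L P (s+4) (by omega), if_neg (by omega)] at hk
        rw [show s + 4 - 2 = s + 2 by omega] at hk ⊢
        rw [hP' 0, tA_out s a P 0 (by omega), add_zero, hL' (s+2), tB_s2P s a L hsp]
        rw [tB_eq_tA s a L (s+4) (by omega),
          tA_tailP s a L hsp (show s + 4 = s + 3 + 1 by omega) (by omega),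
          tA_tailP s a P hsp (show s + 4 = s + 3 + 1 by omega) (by omega)]
        have h1 := h 1 (by omega) (by omega)
        norm_num [krhs] at h1
        linear_combination hk + a * h1
      · -- k ≥ s + 6, (k - s) % 4 = 2
        rw [krhs_eval L' P' k (by omega), if_pos (by omega)]
        rw [krhs_eval L P k (by omega), if_pos (by omega)] at hk
        rw [hL' 0, tB_out s a L 0 (by omega), add_zero, hP' (k-2),
          tA_tailP s a P hsp (show k - 2 = s + 3 + (k - s - 5) by omega) (by omega),
          tB_eq_tA s a L k (by omega),
          tA_tailP s a L hsp (show k = s + 3 + (k - s - 3) by omega) (by omega),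
          tA_tailP s a P hsp (show k = s + 3 + (k - s - 3) by omega) (by omega)]
        have hr := h (k - s - 3) (by omega) (by omega)
        rw [krhs_eval L P (k - s - 3) (by omega), if_pos (by omega)] at hr
        rw [show k - s - 3 - 2 = k - s - 5 by omega] at hr
        linear_combination hk + a * hr
      · -- k ≥ s + 8, (k - s) % 4 = 0
        rw [krhs_eval L' P' k (by omega), if_neg (by omega)]
        rw [krhs_eval L P k (by omega), if_neg (by omega)] at hk
        rw [hP' 0, tA_out s a P 0 (by omega), add_zero, hL' (k-2),
          tB_eq_tA s a L (k-2) (by omega),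
          tA_tailP s a L hsp (show k - 2 = s + 3 + (k - s - 5) by omega) (by omega),
          tB_eq_tA s a L k (by omega),
          tA_tailP s a L hsp (show k = s + 3 + (k - s - 3) by omega) (by omega),
          tA_tailP s a P hsp (show k = s + 3 + (k - s - 3) by omega) (by omega)]
        have hr := h (k - s - 3) (by omega) (by omega)
        rw [krhs_eval L P (k - s - 3) (by omega), if_neg (by omega)] at hr
        rw [show k - s - 3 - 2 = k - s - 5 by omega] at hr
        linear_combination hk + a * hr
    · -- L shape
      rcases (show k = s + 2 ∨ k = s + 4 ∨ k = s + 6 ∨ (s + 8 ≤ k ∧ (k - s) % 4 = 0) ∨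
          (s + 10 ≤ k ∧ (k - s) % 4 = 2) by omega) with
        rfl | rfl | rfl | ⟨h8, hm4⟩ | ⟨h10, hm4⟩
      · -- k = s + 2
        rw [krhs_eval L' P' (s+2) (by omega), if_neg (by omega)]
        rw [krhs_eval L P (s+2) (by omega), if_neg (by omega)] at hk
        rw [show s + 2 - 2 = s by omega] at hk ⊢
        rw [hP' 0, tA_out s a P 0 (by omega), add_zero, hL' s, tB_self,
          tB_s2L s a L hsp, tA_s2L s a P hsp]
        linear_combination hk
      · -- k = s + 4
        rw [krhs_eval L' P' (s+4) (by omega), if_pos (by omega)]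
        rw [krhs_eval L P (s+4) (by omega), if_pos (by omega)] at hk
        rw [show s + 4 - 2 = s + 2 by omega] at hk ⊢
        rw [hL' 0, tB_out s a L 0 (by omega), add_zero, hP' (s+2), tA_s2L s a P hsp,
          tB_eq_tA s a L (s+4) (by omega), tA_s4L s a L hsp, tA_s4L s a P hsp]
        have h1 := h 1 (by omega) (by omega)
        norm_num [krhs] at h1
        linear_combination hk - a * h1
      · -- k = s + 6
        rw [krhs_eval L' P' (s+6) (by omega), if_neg (by omega)]
        rw [krhs_eval L P (s+6) (by omega), if_neg (by omega)] at hk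
        rw [show s + 6 - 2 = s + 4 by omega] at hk ⊢
        rw [hP' 0, tA_out s a P 0 (by omega), add_zero, hL' (s+4),
          tB_eq_tA s a L (s+4) (by omega), tA_s4L s a L hsp,
          tB_eq_tA s a L (s+6) (by omega),
          tA_tailL s a L hsp (show s + 6 = s + 4 + 2 by omega) (by omega) (by omega),
          tA_tailL s a P hsp (show s + 6 = s + 4 + 2 by omega) (by omega) (by omega)]
        have h2 := h 2 (by omega) (by omega)
        norm_num [krhs] at h2
        linear_combination hk - a * h2
      · -- k ≥ s + 8, (k - s) % 4 = 0
        rw [krhs_eval L' P' k (by omega), if_pos (by omega)]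
        rw [krhs_eval L P k (by omega), if_pos (by omega)] at hk
        rw [hL' 0, tB_out s a L 0 (by omega), add_zero, hP' (k-2),
          tA_tailL s a P hsp (show k - 2 = s + 4 + (k - s - 6) by omega) (by omega) (by omega),
          tB_eq_tA s a L k (by omega),
          tA_tailL s a L hsp (show k = s + 4 + (k - s - 4) by omega) (by omega) (by omega),
          tA_tailL s a P hsp (show k = s + 4 + (k - s - 4) by omega) (by omega) (by omega)]
        have hr := h (k - s - 4) (by omega) (by omega)
        rw [krhs_eval L P (k - s - 4) (by omega), if_pos (by omega)] at hr
        rw [show k - s - 4 - 2 = k - s - 6 by omega] at hr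
        linear_combination hk - a * hr
      · -- k ≥ s + 10, (k - s) % 4 = 2
        rw [krhs_eval L' P' k (by omega), if_neg (by omega)]
        rw [krhs_eval L P k (by omega), if_neg (by omega)] at hk
        rw [hP' 0, tA_out s a P 0 (by omega), add_zero, hL' (k-2),
          tB_eq_tA s a L (k-2) (by omega),
          tA_tailL s a L hsp (show k - 2 = s + 4 + (k - s - 6) by omega) (by omega) (by omega),
          tB_eq_tA s a L k (by omega),
          tA_tailL s a L hsp (show k = s + 4 + (k - s - 4) by omega) (by omega) (by omega),
          tA_tailL s a P hsp (show k = s + 4 + (k - s - 4) by omega) (by omega) (by omega)]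
        have hr := h (k - s - 4) (by omega) (by omega)
        rw [krhs_eval L P (k - s - 4) (by omega), if_neg (by omega)] at hr
        rw [show k - s - 4 - 2 = k - s - 6 by omega] at hr
        linear_combination hk - a * hr



lemma dinc_iff {n : ℕ} (p l : Fin n → F) :
    DInc n F p l ↔ Sat n (coordOf l) (coordOf p) := by
  constructor
  · intro h k hk1 hkN
    have H := h (k + 1) (by omega) (by omega)
    simp only [Nat.add_sub_cancel] at H
    rcases (show k = 1 ∨ k = 2 ∨ k = 3 ∨ 4 ≤ k by omega) with rfl | rfl | rfl | hk4
    · norm_num [krhs] at H ⊢; exact H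
    · norm_num [krhs] at H ⊢; exact H
    · norm_num [krhs] at H ⊢; exact H
    · rw [if_neg (by omega), if_neg (by omega), if_neg (by omega)] at H
      rw [krhs_eval _ _ _ (by omega)]
      rw [show k + 1 - 3 = k - 2 by omega] at H
      by_cases hm : k % 4 = 3 ∨ k % 4 = 0
      · rw [if_pos hm]; rw [if_pos (by omega)] at H; exact H
      · rw [if_neg hm]; rw [if_neg (by omega)] at H; exact H
  · intro h m hm2 hmn
    have H := h (m - 1) (by omega) (by omega)
    rcases (show m = 2 ∨ m = 3 ∨ m = 4 ∨ 5 ≤ m by omega) with rfl | rfl | rfl | hm5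
    · norm_num [krhs] at H ⊢; exact H
    · norm_num [krhs] at H ⊢; exact H
    · norm_num [krhs] at H ⊢; exact H
    · rw [krhs_eval _ _ _ (by omega)] at H
      rw [if_neg (by omega), if_neg (by omega), if_neg (by omega)]
      rw [show m - 1 - 2 = m - 3 by omega] at H
      by_cases hm : m % 4 = 1 ∨ m % 4 = 0
      · rw [if_pos hm]; rw [if_pos (by omega)] at H; exact H
      · rw [if_neg hm]; rw [if_neg (by omega)] at H; exact H

/-- Build a line through `p` with prescribed first coordinate `t`. -/
def buildL (P : ℕ → F) (t : F) : ℕ → F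
  | 0 => t
  | 1 => P 1 + t * P 0
  | 2 => P 2 + (P 1 + t * P 0) * P 0
  | (k + 3) => P (k + 3) +
      (if (k + 3) % 4 = 3 ∨ (k + 3) % 4 = 0 then t * P (k + 1) else buildL P t (k + 1) * P 0)

/-- Build a point on `l` with prescribed first coordinate `t`. -/
def buildP (L : ℕ → F) (t : F) : ℕ → F
  | 0 => t
  | 1 => L 1 - L 0 * t
  | 2 => L 2 - L 1 * t
  | (k + 3) => L (k + 3) -
      (if (k + 3) % 4 = 3 ∨ (k + 3) % 4 = 0 then L 0 * buildP L t (k + 1) else L (k + 1) * t)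

lemma buildL_sat (P : ℕ → F) (t : F) (N : ℕ) : Sat N (buildL P t) P := by
  intro k hk1 hkN
  rcases (show k = 1 ∨ k = 2 ∨ 3 ≤ k by omega) with rfl | rfl | h3
  · show buildL P t 1 - P 1 = _
    norm_num [krhs, buildL]
  · show buildL P t 2 - P 2 = _
    norm_num [krhs, buildL]
  · obtain ⟨j, rfl⟩ : ∃ j, k = j + 3 := ⟨k - 3, by omega⟩
    rw [krhs_eval _ _ _ (by omega)]
    rw [show j + 3 - 2 = j + 1 by omega]
    by_cases hc : (j + 3) % 4 = 3 ∨ (j + 3) % 4 = 0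
    · rw [if_pos hc]
      show (P (j+3) + _) - P (j+3) = buildL P t 0 * P (j + 1)
      rw [if_pos hc]
      show (P (j+3) + t * P (j+1)) - P (j+3) = t * P (j+1)
      ring
    · rw [if_neg hc]
      show (P (j+3) + _) - P (j+3) = buildL P t (j + 1) * P 0
      rw [if_neg hc]
      ring

lemma buildP_sat (L : ℕ → F) (t : F) (N : ℕ) : Sat N L (buildP L t) := by
  intro k hk1 hkN
  rcases (show k = 1 ∨ k = 2 ∨ 3 ≤ k by omega) with rfl | rfl | h3
  · show L 1 - buildP L t 1 = _
    norm_num [krhs, buildP]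
  · show L 2 - buildP L t 2 = _
    norm_num [krhs, buildP]
  · obtain ⟨j, rfl⟩ : ∃ j, k = j + 3 := ⟨k - 3, by omega⟩
    rw [krhs_eval _ _ _ (by omega)]
    rw [show j + 3 - 2 = j + 1 by omega]
    by_cases hc : (j + 3) % 4 = 3 ∨ (j + 3) % 4 = 0
    · rw [if_pos hc]
      show L (j+3) - (L (j+3) - if (j + 3) % 4 = 3 ∨ (j + 3) % 4 = 0
        then L 0 * buildP L t (j + 1) else L (j + 1) * t) = L 0 * buildP L t (j + 1)
      rw [if_pos hc]; ring
    · rw [if_neg hc]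
      show L (j+3) - (L (j+3) - if (j + 3) % 4 = 3 ∨ (j + 3) % 4 = 0
        then L 0 * buildP L t (j + 1) else L (j + 1) * t) = L (j + 1) * t
      rw [if_neg hc]; ring

section Maps
variable (n : ℕ)

def pMap (s : ℕ) (a : F) (p : Fin n → F) : Fin n → F :=
  fun i => p i + tA s a (coordOf p) i

def lMap (s : ℕ) (a : F) (l : Fin n → F) : Fin n → F :=
  fun i => l i + tB s a (coordOf l) i

lemma coordOf_eq (x : Fin n → F) (j : ℕ) (hj : j < n) : coordOf x j = x ⟨j, hj⟩ :=
  dif_pos hj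

lemma coordOf_pMap (s : ℕ) (a : F) (p : Fin n → F) (j : ℕ) (hj : j < n) :
    coordOf (pMap n s a p) j = coordOf p j + tA s a (coordOf p) j := by
  rw [coordOf_eq n _ j hj, coordOf_eq n p j hj]; rfl

lemma coordOf_lMap (s : ℕ) (a : F) (l : Fin n → F) (j : ℕ) (hj : j < n) :
    coordOf (lMap n s a l) j = coordOf l j + tB s a (coordOf l) j := by
  rw [coordOf_eq n _ j hj, coordOf_eq n l j hj]; rfl

lemma dinc_map (s : ℕ) (hs : 2 ≤ s) (a : F) (p l : Fin n → F) (h : DInc n F p l) :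
    DInc n F (pMap n s a p) (lMap n s a l) := by
  rw [dinc_iff] at h ⊢
  intro k hk1 hkN
  have key := sat_trans s hs a (coordOf l) (coordOf p)
      (fun j => coordOf l j + tB s a (coordOf l) j)
      (fun j => coordOf p j + tA s a (coordOf p) j)
      (fun _ => rfl) (fun _ => rfl) h k hk1 hkN
  rw [coordOf_pMap n s a p k hkN, coordOf_lMap n s a l k hkN]
  have hc : krhs (coordOf (lMap n s a l)) (coordOf (pMap n s a p)) k
      = krhs (fun j => coordOf l j + tB s a (coordOf l) j)
             (fun j => coordOf p j + tA s a (coordOf p) j) k :=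
    krhs_congr (coordOf_lMap n s a l 0 (by omega)) (coordOf_lMap n s a l 1 (by omega))
      (coordOf_lMap n s a l (k-2) (by omega)) (coordOf_pMap n s a p 0 (by omega))
      (coordOf_pMap n s a p (k-2) (by omega))
  rw [hc]
  exact key

lemma tA_local (s : ℕ) (a : F) (hs : 2 ≤ s) (X Y : ℕ → F) (j : ℕ)
    (hxy : ∀ i, i < j → X i = Y i) : tA s a X j = tA s a Y j := by
  unfold tA
  split_ifs with h1 h2 h3 h4 h5 h6
  all_goals first
    | rfl
    | rw [hxy 0 (by omega)]
    | rw [hxy 1 (by omega)]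
    | rw [hxy (j - s - 3) (by omega)]
    | rw [hxy (j - s - 4) (by omega)]

lemma tB_local (s : ℕ) (a : F) (hs : 2 ≤ s) (X Y : ℕ → F) (j : ℕ)
    (hxy : ∀ i, i < j → X i = Y i) : tB s a X j = tB s a Y j := by
  unfold tB
  split_ifs with h1 h2 h3
  · rfl
  · rw [hxy 0 (by omega)]
  · rfl
  · exact tA_local s a hs X Y j hxy

lemma coordOf_local (x y : Fin n → F) (j : ℕ)
    (h : ∀ i : ℕ, i < j → coordOf x i = coordOf y i) : True := trivial

lemma pMap_inj (s : ℕ) (hs : 2 ≤ s) (a : F) : Function.Injective (pMap n s a) := by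
  intro x y hxy
  have key : ∀ j, coordOf x j = coordOf y j := by
    intro j
    induction j using Nat.strong_induction_on with
    | _ j ih =>
      by_cases hj : j < n
      · have e : x ⟨j, hj⟩ + tA s a (coordOf x) j = y ⟨j, hj⟩ + tA s a (coordOf y) j :=
          congrFun hxy ⟨j, hj⟩
        have hA : tA s a (coordOf x) j = tA s a (coordOf y) j :=
          tA_local s a hs _ _ j (fun i hi => ih i hi)
        rw [coordOf_eq n x j hj, coordOf_eq n y j hj]
        rw [hA] at e
        exact add_right_cancel e
      · unfold coordOf; rw [dif_neg hj, dif_neg hj]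
  funext i
  have := key i
  rwa [coordOf_eq n x i i.isLt, coordOf_eq n y i i.isLt] at this

lemma lMap_inj (s : ℕ) (hs : 2 ≤ s) (a : F) : Function.Injective (lMap n s a) := by
  intro x y hxy
  have key : ∀ j, coordOf x j = coordOf y j := by
    intro j
    induction j using Nat.strong_induction_on with
    | _ j ih =>
      by_cases hj : j < n
      · have e : x ⟨j, hj⟩ + tB s a (coordOf x) j = y ⟨j, hj⟩ + tB s a (coordOf y) j :=
          congrFun hxy ⟨j, hj⟩
        have hB : tB s a (coordOf x) j = tB s a (coordOf y) j :=
          tB_local s a hs _ _ j (fun i hi => ih i hi)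
        rw [coordOf_eq n x j hj, coordOf_eq n y j hj]
        rw [hB] at e
        exact add_right_cancel e
      · unfold coordOf; rw [dif_neg hj, dif_neg hj]
  funext i
  have := key i
  rwa [coordOf_eq n x i i.isLt, coordOf_eq n y i i.isLt] at this

end Maps

open SimpleGraph

/-- Two vertices have isomorphic components. -/
def CIso {V : Type*} (G : SimpleGraph V) (u v : V) : Prop :=
  Nonempty ((SimpleGraph.induce (G.connectedComponentMk u).supp G) ≃g
            (SimpleGraph.induce (G.connectedComponentMk v).supp G))

lemma CIso.refl {V : Type*} (G : SimpleGraph V) (u : V) : CIso G u u := ⟨RelIso.refl _⟩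

lemma CIso.symm {V : Type*} {G : SimpleGraph V} {u v : V} (h : CIso G u v) : CIso G v u :=
  h.elim fun f => ⟨f.symm⟩

lemma CIso.trans {V : Type*} {G : SimpleGraph V} {u v w : V} (h : CIso G u v)
    (h' : CIso G v w) : CIso G u w :=
  h.elim fun f => h'.elim fun g => ⟨f.trans g⟩

lemma ciso_of_reachable {V : Type*} {G : SimpleGraph V} {u v : V} (h : G.Reachable u v) :
    CIso G u v := by
  unfold CIso
  rw [ConnectedComponent.sound h]
  exact ⟨RelIso.refl _⟩

lemma ciso_of_aut {V : Type*} {G : SimpleGraph V} (f : G ≃g G) (u : V) : CIso G u (f u) := by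
  have hmem : ∀ w : V, w ∈ (G.connectedComponentMk u).supp ↔
      f w ∈ (G.connectedComponentMk (f u)).supp := by
    intro w
    simp only [ConnectedComponent.mem_supp_iff, ConnectedComponent.eq]
    constructor
    · intro h; exact h.map f.toHom
    · intro h
      have := h.map f.symm.toHom
      simpa using this
  refine ⟨⟨f.toEquiv.subtypeEquiv hmem, ?_⟩⟩
  intro a b
  simp only [Equiv.subtypeEquiv_apply, comap_adj]
  exact f.map_rel_iff

lemma iso_of_forward {V : Type*} [Finite V] (G : SimpleGraph V) (e : V ≃ V)
    (h : ∀ x y, G.Adj x y → G.Adj (e x) (e y)) :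
    ∃ f : G ≃g G, ∀ v, f v = e v := by
  have hiter : ∀ (m : ℕ) (x y : V), G.Adj x y →
      G.Adj ((e ^ m : Equiv.Perm V) x) ((e ^ m : Equiv.Perm V) y) := by
    intro m
    induction m with
    | zero => intro x y hxy; simpa using hxy
    | succ m ih =>
      intro x y hxy
      have h2 := ih (e x) (e y) (h x y hxy)
      rw [pow_succ]
      simpa [Equiv.Perm.mul_apply] using h2
  refine ⟨⟨e, ?_⟩, fun v => rfl⟩
  intro x y
  constructor
  · intro hxy
    haveI : Fintype (Equiv.Perm V) := Fintype.ofFinite _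
    set c := Fintype.card (Equiv.Perm V) with hc
    have hcpos : 0 < c := Fintype.card_pos
    have hone : (e : Equiv.Perm V) ^ c = 1 := pow_card_eq_one
    have key : ∀ z : V, (e ^ (c - 1) : Equiv.Perm V) (e z) = z := by
      intro z
      have hmul : (e ^ (c - 1) : Equiv.Perm V) * e = 1 := by
        rw [← pow_succ, show c - 1 + 1 = c by omega, hone]
      have := congrFun (congrArg (fun (g : Equiv.Perm V) => (g : V → V)) hmul) z
      simpa [Equiv.Perm.mul_apply] using this
    have h3 := hiter (c - 1) (e x) (e y) hxy
    rwa [key x, key y] at h3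
  · exact h x y

section Assemble
variable (n : ℕ) [Fintype F]

noncomputable def autEquiv (s : ℕ) (hs : 2 ≤ s) (a : F) :
    ((Fin n → F) ⊕ (Fin n → F)) ≃ ((Fin n → F) ⊕ (Fin n → F)) :=
  Equiv.ofBijective (Sum.map (pMap n s a) (lMap n s a))
    (Finite.injective_iff_bijective.mp
      ((pMap_inj n s hs a).sumMap (lMap_inj n s hs a)))

lemma autEquiv_adj (s : ℕ) (hs : 2 ≤ s) (a : F) :
    ∀ x y, (DGraph n F).Adj x y →
      (DGraph n F).Adj (autEquiv n s hs a x) (autEquiv n s hs a y) := by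
  rintro (p | l) (p' | l') h
  · exact h.elim
  · exact dinc_map n s hs a p l' h
  · exact dinc_map n s hs a p' l h
  · exact h.elim

lemma exists_line (hn : 2 ≤ n) (p : Fin n → F) (t : F) :
    ∃ l : Fin n → F, DInc n F p l ∧ coordOf l 0 = t := by
  refine ⟨fun i => buildL (coordOf p) t i, ?_, ?_⟩
  · rw [dinc_iff]
    intro k hk1 hkN
    have he : ∀ j, j < n →
        coordOf (fun i : Fin n => buildL (coordOf p) t i) j = buildL (coordOf p) t j := by
      intro j hj; rw [coordOf_eq n _ j hj]
    rw [he k hkN,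
      krhs_congr (he 0 (by omega)) (he 1 (by omega)) (he (k-2) (by omega)) rfl rfl]
    exact buildL_sat (coordOf p) t n k hk1 hkN
  · rw [coordOf_eq n _ 0 (by omega)]
    rfl

lemma exists_point (hn : 2 ≤ n) (l : Fin n → F) (t : F) :
    ∃ p : Fin n → F, DInc n F p l ∧ coordOf p 0 = t := by
  refine ⟨fun i => buildP (coordOf l) t i, ?_, ?_⟩
  · rw [dinc_iff]
    intro k hk1 hkN
    have he : ∀ j, j < n →
        coordOf (fun i : Fin n => buildP (coordOf l) t i) j = buildP (coordOf l) t j := by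
      intro j hj; rw [coordOf_eq n _ j hj]
    rw [he k hkN,
      krhs_congr rfl rfl rfl (he 0 (by omega)) (he (k-2) (by omega))]
    exact buildP_sat (coordOf l) t n k hk1 hkN
  · rw [coordOf_eq n _ 0 (by omega)]
    rfl

lemma walk0 (hn : 2 ≤ n) (p : Fin n → F) (t : F) :
    ∃ q, (DGraph n F).Reachable (Sum.inl p) (Sum.inl q) ∧ coordOf q 0 = t := by
  obtain ⟨l, hl, -⟩ := exists_line n hn p 0
  obtain ⟨q, hq, hq0⟩ := exists_point n hn l t
  exact ⟨q, ((show (DGraph n F).Adj (Sum.inl p) (Sum.inr l) from hl).reachable).trans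
    (show (DGraph n F).Adj (Sum.inr l) (Sum.inl q) from hq).reachable, hq0⟩

lemma eqn1 (hn : 2 ≤ n) (x y : Fin n → F) (hxy : DInc n F x y) :
    coordOf y 1 - coordOf x 1 = coordOf y 0 * coordOf x 0 := by
  have := (dinc_iff x y).mp hxy 1 le_rfl (by omega)
  simpa [krhs] using this

lemma walk1 (hn : 2 ≤ n) (p : Fin n → F) (b : F) :
    ∃ q, (DGraph n F).Reachable (Sum.inl p) (Sum.inl q) ∧
      coordOf q 0 = coordOf p 0 ∧ coordOf q 1 = b := by
  obtain ⟨l, hl, hl0⟩ := exists_line n hn p 0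
  obtain ⟨p2, hp2, hp20⟩ := exists_point n hn l (coordOf p 0 + 1)
  obtain ⟨l2, hl2, hl20⟩ := exists_line n hn p2 (b - coordOf p2 1)
  obtain ⟨q, hq, hq0⟩ := exists_point n hn l2 (coordOf p 0)
  refine ⟨q, ?_, hq0, ?_⟩
  · exact ((show (DGraph n F).Adj (Sum.inl p) (Sum.inr l) from hl).reachable).trans
      ((((show (DGraph n F).Adj (Sum.inr l) (Sum.inl p2) from hp2).reachable).trans
      ((show (DGraph n F).Adj (Sum.inl p2) (Sum.inr l2) from hl2).reachable)).trans
      ((show (DGraph n F).Adj (Sum.inr l2) (Sum.inl q) from hq).reachable))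
  · have e3 := eqn1 n hn p2 l2 hl2
    have e4 := eqn1 n hn q l2 hq
    rw [hl20] at e3 e4
    rw [hq0] at e4
    rw [hp20] at e3
    linear_combination e3 - e4

lemma main_pts (hn : 2 ≤ n) :
    ∀ d k : ℕ, n ≤ k + d → 2 ≤ k → ∀ p q : Fin n → F,
      (∀ j, j < k → coordOf p j = coordOf q j) →
      CIso (DGraph n F) (Sum.inl p) (Sum.inl q) := by
  intro d
  induction d with
  | zero =>
    intro k hnk hk2 p q hagree
    have hpq : p = q := by
      funext i
      have := hagree i (by omega)
      rwa [coordOf_eq n p i i.isLt, coordOf_eq n q i i.isLt] at this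
    rw [hpq]
    exact CIso.refl _ _
  | succ d ih =>
    intro k hnk hk2 p q hagree
    by_cases hkn : n ≤ k
    · exact ih k (by omega) hk2 p q hagree
    · push_neg at hkn
      set a := coordOf q k - coordOf p k with ha
      obtain ⟨f, hf⟩ := iso_of_forward (DGraph n F) (autEquiv n k hk2 a) (autEquiv_adj n k hk2 a)
      have step : CIso (DGraph n F) (Sum.inl p) (Sum.inl (pMap n k a p)) := by
        have hstep := ciso_of_aut f (Sum.inl p)
        rw [hf (Sum.inl p)] at hstep
        exact hstep
      refine step.trans (ih (k+1) (by omega) (by omega) (pMap n k a p) q ?_)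
      intro j hj
      rcases (show j < k ∨ j = k by omega) with hjk | hjk
      · rw [coordOf_pMap n k a p j (by omega), tA_out k a _ j (by omega), add_zero]
        exact hagree j hjk
      · rw [hjk, coordOf_pMap n k a p k hkn, tA_self, ha]
        ring

end Assemble

end DCI

/-- Any two connected components of `D(n,q)` are isomorphic: for vertices `u, v`, the induced
subgraphs on the connected components of `u` and of `v` are isomorphic. -/
theorem DGraph_components_isomorphic (n : ℕ) (hn : 2 ≤ n) (F : Type*) [Field F] [Fintype F]
    (u v : (Fin n → F) ⊕ (Fin n → F)) :
    Nonempty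
      ((SimpleGraph.induce ((DGraph n F).connectedComponentMk u).supp (DGraph n F)) ≃g
       (SimpleGraph.induce ((DGraph n F).connectedComponentMk v).supp (DGraph n F))) := by
  have hpt : ∀ w : (Fin n → F) ⊕ (Fin n → F),
      ∃ p, DCI.CIso (DGraph n F) w (Sum.inl p) := by
    intro w
    rcases w with p | l
    · exact ⟨p, DCI.CIso.refl _ _⟩
    · obtain ⟨p, hp, -⟩ := DCI.exists_point n hn l 0
      exact ⟨p, DCI.ciso_of_reachable
        (show (DGraph n F).Adj (Sum.inr l) (Sum.inl p) from hp).reachable⟩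
  obtain ⟨p, hp⟩ := hpt u
  obtain ⟨q, hq⟩ := hpt v
  have main : DCI.CIso (DGraph n F) (Sum.inl p) (Sum.inl q) := by
    obtain ⟨q1, hr1, hq10⟩ := DCI.walk0 n hn q (coordOf p 0)
    obtain ⟨q2, hr2, hq20, hq21⟩ := DCI.walk1 n hn q1 (coordOf p 1)
    have c1 : DCI.CIso (DGraph n F) (Sum.inl q) (Sum.inl q2) :=
      DCI.ciso_of_reachable (hr1.trans hr2)
    have c2 : DCI.CIso (DGraph n F) (Sum.inl p) (Sum.inl q2) := by
      refine DCI.main_pts n hn n 2 (by omega) le_rfl p q2 ?_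
      intro j hj
      rcases (show j = 0 ∨ j = 1 by omega) with rfl | rfl
      · rw [hq20, hq10]
      · rw [hq21]
    exact c2.trans c1.symm
  exact hp.trans (main.trans hq.symm)
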